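/- Let m > n ≥ 0 be integers. Then for every square-summable sequence (u_k)_{k≥0} of complex numbers: Σ_{k=0}^{m−n−1} (k+m−n+1)(k+1)/(k+m+1)²·|u_k|² + Σ_{k=m−n}^{∞} ( (k+m−n+1)/(k+m+1)² − (k+n−m+1)/(k+n+1)² )·(k+1)·|u_k|² ≤ (1/2)·Σ_{k=0}^{∞} |u_k|². (Theorem: ‖[T_{z^m z̄^n}*, T_{z^m z̄^n}]‖ ≤ 1/2 for m > n, supporting the conjecture that ‖[T_φ*, T_φ]‖ ≤ Area(φ(𝔻))/(2π) for every hyponormal Toeplitz operator on the Bergman space.) -/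

import Mathlib

private lemma head_le (k m n : ℝ) (hk : 0 ≤ k) (hn : 0 ≤ n) (hkd : k + 1 ≤ m - n) :
    (k + m - n + 1) * (k + 1) / (k + m + 1) ^ 2 ≤ 1 / 2 := by
  have h3 : (0:ℝ) < k + m + 1 := by nlinarith
  rw [div_le_iff₀ (by positivity)]
  nlinarith [mul_nonneg (show (0:ℝ) ≤ k + m - n + 1 by nlinarith)
      (show (0:ℝ) ≤ (m - n) - (k + 1) by linarith),
    mul_nonneg hn (show (0:ℝ) ≤ 2*k + 2*m - n + 2 by nlinarith)]

private lemma tail_nonneg (k m n : ℝ) (hk : 0 ≤ k) (hn : 0 ≤ n) (h1 : 1 ≤ m - n) :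
    0 ≤ (k + (m - n) + m - n + 1) / (k + (m - n) + m + 1) ^ 2
      - (k + (m - n) + n - m + 1) / (k + (m - n) + n + 1) ^ 2 := by
  have hP : (0:ℝ) < k + (m - n) + n + 1 := by nlinarith
  have hQ : (0:ℝ) < k + (m - n) + m + 1 := by nlinarith
  rw [sub_nonneg, div_le_div_iff₀ (by positivity) (by positivity)]
  nlinarith [mul_nonneg (show (0:ℝ) ≤ m - n - 1 by linarith)
      (show (0:ℝ) ≤ 2*(k+m+1)*m - (k+1)*(m-n) by nlinarith),
    mul_pos hP hQ]

private lemma tail_le (k m n : ℝ) (hk : 0 ≤ k) (hn : 0 ≤ n) (h1 : 1 ≤ m - n) :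
    ((k + (m - n) + m - n + 1) / (k + (m - n) + m + 1) ^ 2
      - (k + (m - n) + n - m + 1) / (k + (m - n) + n + 1) ^ 2)
      * (k + (m - n) + 1) ≤ 1 / 2 := by
  have hP : (0:ℝ) < k + (m - n) + n + 1 := by nlinarith
  have hQ : (0:ℝ) < k + (m - n) + m + 1 := by nlinarith
  have key : ((k + (m - n) + m - n + 1) / (k + (m - n) + m + 1) ^ 2
      - (k + (m - n) + n - m + 1) / (k + (m - n) + n + 1) ^ 2)
      * (k + (m - n) + 1)
      = ((k + (m - n) + m - n + 1) * (k + (m - n) + n + 1) ^ 2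
          - (k + (m - n) + n - m + 1) * (k + (m - n) + m + 1) ^ 2)
        * (k + (m - n) + 1) / ((k + (m - n) + m + 1) ^ 2 * (k + (m - n) + n + 1) ^ 2) := by
    field_simp
  rw [key, div_le_iff₀ (by positivity)]
  -- notation: a = k+1, d = m-n, P = k+m+1, Q = k+d+m+1, C = k+d+1
  have hid : (k + (m - n) + m - n + 1) * (k + (m - n) + n + 1) ^ 2
      - (k + (m - n) + n - m + 1) * (k + (m - n) + m + 1) ^ 2
      = (m - n) * (2 * (k + m + 1) * m - (k + 1) * (m - n)) := by ring
  have h4 : 4 * (m - n) * m ≤ (k + (m - n) + m + 1) ^ 2 := by nlinarith [sq_nonneg n]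
  have h5 : k + (m - n) + 1 ≤ k + m + 1 := by linarith
  have h6 : (m - n) * (2 * (k + m + 1) * m - (k + 1) * (m - n))
      ≤ 2 * (k + m + 1) * m * (m - n) := by
    nlinarith [mul_nonneg (mul_nonneg hk (show (0:ℝ) ≤ m - n by linarith)) (show (0:ℝ) ≤ m - n by linarith),
      mul_nonneg (show (0:ℝ) ≤ m - n by linarith) (show (0:ℝ) ≤ m - n by linarith)]
  have hPpos : (0:ℝ) < k + m + 1 := by nlinarith
  have h7 : 4 * (m - n) * m * ((k + (m - n) + 1) * (k + m + 1))
      ≤ (k + (m - n) + m + 1) ^ 2 * ((k + m + 1) * (k + m + 1)) := by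
    have h8 : (k + (m - n) + 1) * (k + m + 1) ≤ (k + m + 1) * (k + m + 1) :=
      mul_le_mul_of_nonneg_right h5 (le_of_lt hPpos)
    calc 4 * (m - n) * m * ((k + (m - n) + 1) * (k + m + 1))
        ≤ (k + (m - n) + m + 1) ^ 2 * ((k + (m - n) + 1) * (k + m + 1)) := by
          apply mul_le_mul_of_nonneg_right h4
          positivity
      _ ≤ (k + (m - n) + m + 1) ^ 2 * ((k + m + 1) * (k + m + 1)) := by
          apply mul_le_mul_of_nonneg_left h8
          positivity
  nlinarith [h7, hid, h6, mul_nonneg (show (0:ℝ) ≤ k + (m-n) + 1 by nlinarith) (show (0:ℝ) ≤ m - n by linarith)]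

/-- `‖[T_{z^m z̄^n}*, T_{z^m z̄^n}]‖ ≤ 1/2` for `m > n`: the self-commutator quadratic
form of the Toeplitz operator with symbol `z^m z̄^n` on the Bergman space, expressed in
the orthonormal basis coefficients `u_k`, is bounded by `(1/2)·Σ|u_k|²`. -/
theorem commutator_norm_le_half (m n : ℕ) (h : n < m) (u : ℕ → ℂ)
    (hu : Summable fun k : ℕ => ‖u k‖ ^ 2) :
    (∑ k ∈ Finset.range (m - n),
        ((k : ℝ) + m - n + 1) * ((k : ℝ) + 1) / ((k : ℝ) + m + 1) ^ 2 * ‖u k‖ ^ 2)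
      + (∑' k : ℕ,
          (((k + (m - n) : ℕ) + m - n + 1 : ℝ) / (((k + (m - n) : ℕ) : ℝ) + m + 1) ^ 2
            - (((k + (m - n) : ℕ) : ℝ) + n - m + 1)
                / (((k + (m - n) : ℕ) : ℝ) + n + 1) ^ 2)
          * (((k + (m - n) : ℕ) : ℝ) + 1) * ‖u (k + (m - n))‖ ^ 2)
      ≤ (1 / 2) * ∑' k : ℕ, ‖u k‖ ^ 2 := by
  have hd : 0 < m - n := Nat.sub_pos_of_lt h
  have hcast : ∀ k : ℕ, ((k + (m - n) : ℕ) : ℝ) = (k : ℝ) + ((m : ℝ) - n) := by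
    intro k; push_cast [Nat.cast_sub h.le]; ring
  simp only [hcast]
  have hmn1 : (1:ℝ) ≤ (m:ℝ) - n := by
    have : (n:ℝ) + 1 ≤ m := by exact_mod_cast h
    linarith
  rw [← Summable.sum_add_tsum_nat_add (m - n) hu, mul_add]
  apply add_le_add
  · rw [Finset.mul_sum]
    apply Finset.sum_le_sum
    intro k hk
    have hk' : (k:ℝ) + 1 ≤ (m:ℝ) - n := by
      have : (k + 1 : ℕ) ≤ m - n := Finset.mem_range.mp hk
      have h2 : ((k+1:ℕ):ℝ) ≤ ((m-n:ℕ):ℝ) := by exact_mod_cast this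
      push_cast [Nat.cast_sub h.le] at h2
      linarith
    exact mul_le_mul_of_nonneg_right
      (head_le k m n (Nat.cast_nonneg k) (Nat.cast_nonneg n) hk') (by positivity)
  · rw [← tsum_mul_left]
    have hbound : ∀ k : ℕ,
        (((k:ℝ) + ((m:ℝ) - n) + m - n + 1) / ((k:ℝ) + ((m:ℝ) - n) + m + 1) ^ 2
          - ((k:ℝ) + ((m:ℝ) - n) + n - m + 1) / ((k:ℝ) + ((m:ℝ) - n) + n + 1) ^ 2)
          * ((k:ℝ) + ((m:ℝ) - n) + 1) * ‖u (k + (m - n))‖ ^ 2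
        ≤ 1 / 2 * ‖u (k + (m - n))‖ ^ 2 := by
      intro k
      exact mul_le_mul_of_nonneg_right
        (tail_le k m n (Nat.cast_nonneg k) (Nat.cast_nonneg n) hmn1) (by positivity)
    have hnn : ∀ k : ℕ,
        0 ≤ (((k:ℝ) + ((m:ℝ) - n) + m - n + 1) / ((k:ℝ) + ((m:ℝ) - n) + m + 1) ^ 2
          - ((k:ℝ) + ((m:ℝ) - n) + n - m + 1) / ((k:ℝ) + ((m:ℝ) - n) + n + 1) ^ 2)
          * ((k:ℝ) + ((m:ℝ) - n) + 1) * ‖u (k + (m - n))‖ ^ 2 := by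
      intro k
      have h1 := tail_nonneg k m n (Nat.cast_nonneg k) (Nat.cast_nonneg n) hmn1
      have h2 : (0:ℝ) ≤ (k:ℝ) + ((m:ℝ) - n) + 1 := by
        have := Nat.cast_nonneg (α := ℝ) k; nlinarith
      positivity
    have hsum : Summable fun k : ℕ => (1:ℝ) / 2 * ‖u (k + (m - n))‖ ^ 2 :=
      (((summable_nat_add_iff (m - n)).mpr hu).mul_left _)
    exact Summable.tsum_le_tsum hbound (hsum.of_nonneg_of_le hnn hbound) hsum
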